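/- Let d ≥ 1 and N ≥ 0 be integers and let A, B, C ∈ M_d(R) be matrices with det A, det B, det C all nonzero, such that: every entry of B is divisible by u^N in R; every entry of the inverse matrix A^{−1} ∈ M_d(k((u))) has u-adic valuation ≥ −N; and B·φ(C) = C·A, where φ is applied to C entrywise. Then det C is a unit of R and ord(det A) = ord(det B) = N·d; consequently C ∈ GL_d(R), u^{−N}B ∈ GL_d(R) and u^{N}A^{−1} ∈ GL_d(R). -/

import Mathlib

open PowerSeries

private lemma decompose15 {k : Type} [Field k] {f : PowerSeries k} (hf : f ≠ 0) :
    ∃ (n : ℕ) (u : PowerSeries k), IsUnit u ∧ f = PowerSeries.X ^ n * u :=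
  ⟨_, _, isUnit_divided_by_X_pow_order hf,
    X_pow_order_mul_divXPowOrder.symm⟩

private lemma pow_unit_eq15 {k : Type} [Field k] {m n : ℕ} {u v : PowerSeries k}
    (hu : IsUnit u) (hv : IsUnit v)
    (h : PowerSeries.X ^ m * u = PowerSeries.X ^ n * v) : m = n := by
  have h1 := congrArg PowerSeries.order h
  rw [order_mul, order_mul, order_X_pow, order_X_pow, order_zero_of_unit hu,
    order_zero_of_unit hv, add_zero, add_zero] at h1
  exact_mod_cast h1

/-- the matrix-valuation argument over `R = k[[u]]`.  Valuation conditions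
are expressed by divisibility in the discrete valuation ring `k[[u]]`: "every entry of
`A⁻¹` has `u`-adic valuation `≥ -N`" becomes `det A ∣ X^N · adj(A)_{ij}`, and
"`ord(det A) = N·d`" becomes `det A = X^{N·d} · (unit)`. -/
theorem statement15
    (p : ℕ) [Fact p.Prime] (k : Type) [Field k] [CharP k p] [PerfectField k]
    (φ : PowerSeries k →+* PowerSeries k)
    (hφ1 : ∀ (f : PowerSeries k) (n : ℕ),
      PowerSeries.coeff (p * n) (φ f) = (PowerSeries.coeff n f) ^ p)
    (hφ2 : ∀ (f : PowerSeries k) (m : ℕ), ¬ p ∣ m → PowerSeries.coeff m (φ f) = 0)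
    (d : ℕ) (hd : 1 ≤ d) (N : ℕ)
    (A B C : Matrix (Fin d) (Fin d) (PowerSeries k))
    (hA : A.det ≠ 0) (hB : B.det ≠ 0) (hC : C.det ≠ 0)
    (hBdiv : ∀ i j, (PowerSeries.X : PowerSeries k) ^ N ∣ B i j)
    (hAinv : ∀ i j, A.det ∣ (PowerSeries.X : PowerSeries k) ^ N * A.adjugate i j)
    (heq : B * C.map φ = C * A) :
    IsUnit C.det ∧
    (∃ w : PowerSeries k, IsUnit w ∧ A.det = PowerSeries.X ^ (N * d) * w) ∧
    (∃ w : PowerSeries k, IsUnit w ∧ B.det = PowerSeries.X ^ (N * d) * w) ∧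
    (∃ B' : Matrix (Fin d) (Fin d) (PowerSeries k),
      (∀ i j, B i j = PowerSeries.X ^ N * B' i j) ∧ IsUnit B'.det) ∧
    (∃ A' : Matrix (Fin d) (Fin d) (PowerSeries k),
      A * A' = ((PowerSeries.X : PowerSeries k) ^ N) • (1 : Matrix (Fin d) (Fin d) (PowerSeries k)) ∧
      A' * A = ((PowerSeries.X : PowerSeries k) ^ N) • (1 : Matrix (Fin d) (Fin d) (PowerSeries k)) ∧
      IsUnit A'.det) := by
  have hp0 : p ≠ 0 := (Fact.out : p.Prime).ne_zero
  have hp2 : 2 ≤ p := (Fact.out : p.Prime).two_le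
  have hXn : ∀ n : ℕ, (PowerSeries.X : PowerSeries k) ^ n ≠ 0 :=
    fun n => pow_ne_zero n PowerSeries.X_ne_zero
  -- φ X = X ^ p
  have hφX : φ (PowerSeries.X : PowerSeries k) = PowerSeries.X ^ p := by
    ext n
    rw [PowerSeries.coeff_X_pow]
    by_cases hpn : p ∣ n
    · obtain ⟨m, rfl⟩ := hpn
      rw [hφ1, PowerSeries.coeff_X]
      rcases eq_or_ne m 1 with rfl | hm
      · simp
      · have hne : p * m ≠ p := by
          intro h
          exact hm (Nat.eq_of_mul_eq_mul_left (Nat.pos_of_ne_zero hp0) (by omega))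
        simp [hm, hne, zero_pow hp0]
    · rw [hφ2 _ _ hpn]
      have : n ≠ p := by rintro rfl; exact hpn dvd_rfl
      simp [this]
  -- φ of a unit is a unit
  have hφu : ∀ {u : PowerSeries k}, IsUnit u → IsUnit (φ u) := by
    intro u hu
    rw [PowerSeries.isUnit_iff_constantCoeff] at hu ⊢
    have h0 : PowerSeries.constantCoeff (φ u) = (PowerSeries.constantCoeff u) ^ p := by
      have := hφ1 u 0
      simpa using this
    rw [h0]
    exact hu.pow p
  -- decompositions
  obtain ⟨a, α, hα, hadet⟩ := decompose15 hA
  obtain ⟨b, β, hβ, hbdet⟩ := decompose15 hB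
  obtain ⟨c, γ, hγ, hcdet⟩ := decompose15 hC
  -- determinant equation
  have hdeteq : B.det * φ C.det = C.det * A.det := by
    have h := congrArg Matrix.det heq
    rw [Matrix.det_mul, Matrix.det_mul] at h
    rwa [RingHom.map_det, RingHom.mapMatrix_apply]
  have hφC : φ C.det = PowerSeries.X ^ (p * c) * φ γ := by
    rw [hcdet, map_mul, map_pow, hφX, ← pow_mul]
  have key : b + p * c = c + a := by
    refine pow_unit_eq15 (hβ.mul (hφu hγ)) (hγ.mul hα) ?_
    have h := hdeteq
    rw [hbdet, hφC, hcdet, hadet] at h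
    rw [pow_add, pow_add]
    linear_combination h
  -- B = X^N • B'
  choose B'f hB'f using hBdiv
  set B' : Matrix (Fin d) (Fin d) (PowerSeries k) := Matrix.of B'f with hB'def
  have hB' : ∀ i j, B i j = PowerSeries.X ^ N * B' i j := fun i j => hB'f i j
  have hBdet2 : B.det = PowerSeries.X ^ (N * d) * B'.det := by
    have hBeq : B = (PowerSeries.X : PowerSeries k) ^ N • B' := by
      ext i j
      rw [Matrix.smul_apply, smul_eq_mul, ← hB' i j]
    rw [hBeq, Matrix.det_smul, Fintype.card_fin, ← pow_mul]
  have hB'ne : B'.det ≠ 0 := by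
    intro h0; apply hB; rw [hBdet2, h0, mul_zero]
  have hNd_le_b : N * d ≤ b := by
    obtain ⟨e, δ, hδ, hddet⟩ := decompose15 hB'ne
    have heq2 : PowerSeries.X ^ (N * d + e) * δ = PowerSeries.X ^ b * β := by
      rw [pow_add, mul_assoc, ← hddet, ← hBdet2, hbdet]
    have := pow_unit_eq15 hδ hβ heq2
    omega
  -- X^N • adjugate A = A.det • A''
  choose A''f hA''f using hAinv
  set A'' : Matrix (Fin d) (Fin d) (PowerSeries k) := Matrix.of A''f with hA''def
  have hA'' : ∀ i j, PowerSeries.X ^ N * A.adjugate i j = A.det * A'' i j :=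
    fun i j => hA''f i j
  have hAdj : (PowerSeries.X : PowerSeries k) ^ N • A.adjugate = A.det • A'' := by
    refine Matrix.ext fun i j => ?_
    simp only [Matrix.smul_apply, smul_eq_mul]
    exact hA'' i j
  have hdetAdj : PowerSeries.X ^ (N * d) * A.det ^ (d - 1) = A.det ^ d * A''.det := by
    have h := congrArg Matrix.det hAdj
    rwa [Matrix.det_smul, Matrix.det_smul, Fintype.card_fin, ← pow_mul,
      Matrix.det_adjugate, Fintype.card_fin] at h
  have hA''ne : A''.det ≠ 0 := by
    intro h0
    rw [h0, mul_zero] at hdetAdj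
    exact mul_ne_zero (hXn (N * d)) (pow_ne_zero _ hA) hdetAdj
  have ha_le : a ≤ N * d := by
    obtain ⟨g, ε, hε, hgdet⟩ := decompose15 hA''ne
    have e1 : A.det ^ (d - 1) = PowerSeries.X ^ (a * (d - 1)) * α ^ (d - 1) := by
      rw [hadet, mul_pow, ← pow_mul]
    have e2 : A.det ^ d = PowerSeries.X ^ (a * d) * α ^ d := by
      rw [hadet, mul_pow, ← pow_mul]
    rw [e1, e2, hgdet] at hdetAdj
    have heq3 : PowerSeries.X ^ (N * d + a * (d - 1)) * α ^ (d - 1)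
        = PowerSeries.X ^ (a * d + g) * (α ^ d * ε) := by
      rw [pow_add, pow_add]
      linear_combination hdetAdj
    have h3 := pow_unit_eq15 (hα.pow (d - 1)) ((hα.pow d).mul hε) heq3
    have h4 : a * (d - 1) + a = a * d := by
      obtain ⟨e, rfl⟩ : ∃ e, d = e + 1 := ⟨d - 1, by omega⟩
      simp [Nat.mul_succ]
    obtain ⟨u1, hu1⟩ : ∃ u1, a * (d - 1) = u1 := ⟨_, rfl⟩
    obtain ⟨u2, hu2⟩ : ∃ u2, a * d = u2 := ⟨_, rfl⟩
    obtain ⟨u3, hu3⟩ : ∃ u3, N * d = u3 := ⟨_, rfl⟩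
    rw [hu1, hu2] at h3 h4
    rw [hu3] at h3 ⊢
    omega
  -- core numerical argument
  have h2c : 2 * c ≤ p * c := Nat.mul_le_mul_right c hp2
  obtain ⟨q, hq⟩ : ∃ q, p * c = q := ⟨_, rfl⟩
  obtain ⟨M, hM⟩ : ∃ M, N * d = M := ⟨_, rfl⟩
  rw [hq] at key h2c
  rw [hM] at hNd_le_b ha_le
  have hc0 : c = 0 := by omega
  have haM : a = N * d := by omega
  have hbM : b = N * d := by omega
  -- conclusions
  have hCunit : IsUnit C.det := by
    rw [hcdet, hc0, pow_zero, one_mul]; exact hγ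
  refine ⟨hCunit, ⟨α, hα, by rw [hadet, haM]⟩, ⟨β, hβ, by rw [hbdet, hbM]⟩, ?_, ?_⟩
  · refine ⟨B', hB', ?_⟩
    have hB'det : B'.det = β :=
      mul_left_cancel₀ (hXn (N * d)) (by rw [← hBdet2, hbdet, hbM])
    rw [hB'det]; exact hβ
  · -- the matrix A'' works
    have hAA : A.det • (A * A'') = A.det • ((PowerSeries.X ^ N : PowerSeries k) •
        (1 : Matrix (Fin d) (Fin d) (PowerSeries k))) := by
      calc A.det • (A * A'') = A * (A.det • A'') := by rw [Matrix.mul_smul]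
        _ = A * (PowerSeries.X ^ N • A.adjugate) := by rw [← hAdj]
        _ = PowerSeries.X ^ N • (A * A.adjugate) := by rw [Matrix.mul_smul]
        _ = PowerSeries.X ^ N • (A.det • 1) := by rw [Matrix.mul_adjugate]
        _ = A.det • (PowerSeries.X ^ N • 1) := smul_comm _ _ _
    have hAA' : A * A'' = (PowerSeries.X ^ N : PowerSeries k) •
        (1 : Matrix (Fin d) (Fin d) (PowerSeries k)) := by
      refine Matrix.ext fun i j => ?_
      have h := congrArg (fun M => M i j) hAA
      simp only [Matrix.smul_apply, smul_eq_mul] at h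
      exact mul_left_cancel₀ hA h
    have hA'A : A.det • (A'' * A) = A.det • ((PowerSeries.X ^ N : PowerSeries k) •
        (1 : Matrix (Fin d) (Fin d) (PowerSeries k))) := by
      calc A.det • (A'' * A) = (A.det • A'') * A := by rw [Matrix.smul_mul]
        _ = (PowerSeries.X ^ N • A.adjugate) * A := by rw [← hAdj]
        _ = PowerSeries.X ^ N • (A.adjugate * A) := by rw [Matrix.smul_mul]
        _ = PowerSeries.X ^ N • (A.det • 1) := by rw [Matrix.adjugate_mul]
        _ = A.det • (PowerSeries.X ^ N • 1) := smul_comm _ _ _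
    have hA'A' : A'' * A = (PowerSeries.X ^ N : PowerSeries k) •
        (1 : Matrix (Fin d) (Fin d) (PowerSeries k)) := by
      refine Matrix.ext fun i j => ?_
      have h := congrArg (fun M => M i j) hA'A
      simp only [Matrix.smul_apply, smul_eq_mul] at h
      exact mul_left_cancel₀ hA h
    refine ⟨A'', hAA', hA'A', ?_⟩
    have hdAA : A.det * A''.det = PowerSeries.X ^ (N * d) := by
      rw [← Matrix.det_mul, hAA', Matrix.det_smul, Fintype.card_fin, Matrix.det_one,
        mul_one, ← pow_mul]
    have h5 : α * A''.det = 1 := by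
      apply mul_left_cancel₀ (hXn (N * d))
      rw [← mul_assoc, ← haM, ← hadet, hdAA, haM, mul_one]
    exact IsUnit.of_mul_eq_one (a := A''.det) α (by rw [mul_comm]; exact h5)
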